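/- arXiv:1207.3615 — 2 statements merged into one kernel-verified Lean document; each statement's English description precedes it below -/
import Mathlib

section
/- Let (g_n) be a sequence of Borel subsets of the d-dimensional torus T^d and (ξ_n) independent uniformly distributed random points in T^d. Then almost surely the Lebesgue measure of E = limsup_{n→∞}(g_n + ξ_n) equals 0 when ∑_n L(g_n) < ∞ and equals 1 when ∑_n L(g_n) = ∞. -/
open MeasureTheory ProbabilityTheory Filter

instance : IsProbabilityMeasure (volume : Measure UnitAddCircle) :=
  ⟨UnitAddCircle.measure_univ⟩

instance (d : ℕ) : (volume : Measure (Fin d → UnitAddCircle)).IsNegInvariant :=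
  Measure.pi.isNegInvariant _

/-- **Random covering of the torus `𝕋^d`: measure dichotomy.**
If `(g n)` are Borel subsets of the `d`-torus and `(ξ n)` are independent uniformly
distributed random points of the torus, then almost surely the random covering set
`E = limsup (g n + ξ n)` has Lebesgue measure `0` when `∑ L(g n) < ∞` and measure `1`
when `∑ L(g n) = ∞`. -/
theorem random_covering_torus_measure_dichotomy
    {Ω : Type*} [MeasurableSpace Ω] (P : Measure Ω) [IsProbabilityMeasure P]
    (d : ℕ) (hd : 0 < d)
    (g : ℕ → Set (Fin d → UnitAddCircle)) (hg : ∀ n, MeasurableSet (g n))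
    (ξ : ℕ → Ω → (Fin d → UnitAddCircle))
    (hmeas : ∀ n, Measurable (ξ n))
    (hindep : iIndepFun ξ P)
    (hunif : ∀ n, Measure.map (ξ n) P = volume) :
    (∑' n, volume (g n) ≠ ⊤ →
      ∀ᵐ ω ∂P, volume (limsup (fun n => (· + ξ n ω) '' g n) atTop) = 0) ∧
    (∑' n, volume (g n) = ⊤ →
      ∀ᵐ ω ∂P, volume (limsup (fun n => (· + ξ n ω) '' g n) atTop) = 1) := by
  have hset : ∀ (c : Fin d → UnitAddCircle) (n : ℕ),
      (· + c) '' g n = {x | x - c ∈ g n} := by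
    intro c n
    rw [Set.image_add_right]
    ext x
    simp [sub_eq_add_neg]
  constructor
  · intro hsum
    refine Filter.Eventually.of_forall fun ω => ?_
    apply measure_limsup_atTop_eq_zero
    have h : ∀ n, volume ((· + ξ n ω) '' g n) = volume (g n) := by
      intro n
      rw [Set.image_add_right]
      exact measure_preimage_add_right volume _ _
    rwa [tsum_congr h]
  · intro hsum
    -- the events as subsets of the product space
    set A : ℕ → Set (Ω × (Fin d → UnitAddCircle)) :=
      fun n => {p | p.2 - ξ n p.1 ∈ g n} with hA
    have hAm : ∀ n, MeasurableSet (A n) :=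
      fun n => (measurable_snd.sub ((hmeas n).comp measurable_fst)) (hg n)
    have hLm : MeasurableSet (limsup A atTop) := MeasurableSet.measurableSet_limsup hAm
    -- key pointwise fact: for each x, a.s. x is covered infinitely often
    have key : ∀ x : Fin d → UnitAddCircle,
        P (limsup (fun n => ξ n ⁻¹' ((fun y => x - y) ⁻¹' g n)) atTop) = 1 := by
      intro x
      have hS : ∀ n, MeasurableSet ((fun y => x - y) ⁻¹' g n) :=
        fun n => (measurable_const.sub measurable_id) (hg n)
      have hBm : ∀ n, MeasurableSet (ξ n ⁻¹' ((fun y => x - y) ⁻¹' g n)) :=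
        fun n => (hmeas n) (hS n)
      have hInd : iIndepSet (fun n => ξ n ⁻¹' ((fun y => x - y) ⁻¹' g n)) P := by
        rw [iIndepSet_iff_meas_biInter hBm]
        exact fun s => hindep.measure_inter_preimage_eq_mul s fun i _ => hS i
      have hPB : ∀ n, P (ξ n ⁻¹' ((fun y => x - y) ⁻¹' g n)) = volume (g n) := by
        intro n
        rw [← Measure.map_apply (hmeas n) (hS n), hunif n]
        exact (Measure.measurePreserving_sub_left volume x).measure_preimage
          (hg n).nullMeasurableSet
      exact ProbabilityTheory.measure_limsup_eq_one hBm hInd (by rwa [tsum_congr hPB])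
    -- Fubini
    have h1 : (P.prod volume) (limsup A atTop)ᶜ = 0 := by
      rw [Measure.prod_apply_symm hLm.compl]
      have : ∀ x : Fin d → UnitAddCircle,
          P ((fun ω => (ω, x)) ⁻¹' (limsup A atTop)ᶜ) = 0 := by
        intro x
        have hsec : (fun ω => (ω, x)) ⁻¹' (limsup A atTop) =
            limsup (fun n => ξ n ⁻¹' ((fun y => x - y) ⁻¹' g n)) atTop := by
          ext ω
          simp only [Set.mem_preimage, mem_limsup_iff_frequently_mem]
          rfl
        have hBm : ∀ n, MeasurableSet (ξ n ⁻¹' ((fun y => x - y) ⁻¹' g n)) :=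
          fun n => (hmeas n) ((measurable_const.sub measurable_id) (hg n))
        rw [Set.preimage_compl, hsec, measure_compl (MeasurableSet.measurableSet_limsup hBm)
          (measure_ne_top _ _), key x, measure_univ, tsub_self]
      simp only [Set.preimage_compl] at this ⊢
      simp [this]
    rw [Measure.prod_apply hLm.compl] at h1
    have h2 : ∀ᵐ ω ∂P, volume (Prod.mk ω ⁻¹' (limsup A atTop)ᶜ) = 0 :=
      (lintegral_eq_zero_iff (measurable_measure_prodMk_left hLm.compl)).mp h1
    filter_upwards [h2] with ω hω
    have hsec : Prod.mk ω ⁻¹' (limsup A atTop) =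
        limsup (fun n => (· + ξ n ω) '' g n) atTop := by
      ext x
      simp only [Set.mem_preimage, mem_limsup_iff_frequently_mem, hset]
      rfl
    rw [Set.preimage_compl, hsec] at hω
    have hM : MeasurableSet (limsup (fun n => (· + ξ n ω) '' g n) atTop) := by
      refine MeasurableSet.measurableSet_limsup fun n => ?_
      rw [hset]
      exact (measurable_id.sub measurable_const) (hg n)
    exact (prob_compl_eq_zero_iff hM).mp hω
end

section
/- Let s be non-integral with 0 < s < d and let T : R^d → R^d be an affine injection. Then there exists a constant D_0 < ∞, depending only on d and s, such that ∫_{[0,1]^d} |T(x)|^{−s} dL(x) ≤ D_0 / Φ^s(T). -/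
open MeasureTheory Filter

/-- The singular value function `Φ^s(α) = α 0 ⋯ α (m-2) · (α (m-1))^(s-(m-1))`,
where `m = ⌈s⌉` is the integer with `m - 1 < s ≤ m` and `α` lists the singular values
in decreasing order. -/
noncomputable def svf (α : ℕ → ℝ) (s : ℝ) : ℝ :=
  (∏ i ∈ Finset.range (⌈s⌉₊ - 1), α i) * α (⌈s⌉₊ - 1) ^ (s - ((⌈s⌉₊ : ℝ) - 1))

lemma falconer_oneDim {s A c : ℝ} {m : ℕ} (hA : 0 < A) (hc : 0 < c)
    (hs : 0 < s) (h1 : ((m:ℝ) - 1) < s) (h2 : s < m) :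
    (∫⁻ t in Set.Ioi (0:ℝ),
        ENNReal.ofReal (t ^ (-(((m:ℝ)-1)/s)) * min A (c * t ^ (-(1/s))))) ≤
      ENNReal.ofReal ((s/(s-((m:ℝ)-1)) + s/((m:ℝ)-s)) * (A * (A/c) ^ ((m:ℝ)-1-s))) := by
  have hm1 : (1:ℝ) ≤ (m:ℝ) := by
    have : 0 < m := by exact_mod_cast hs.trans h2
    exact_mod_cast this
  set a : ℝ := ((m:ℝ)-1)/s with ha_def
  have ha0 : 0 ≤ a := div_nonneg (by linarith) hs.le
  have ha1 : a < 1 := (div_lt_one hs).mpr h1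
  have hAc : 0 < A / c := div_pos hA hc
  have hX : 0 < A * (A/c) ^ ((m:ℝ)-1-s) := mul_pos hA (Real.rpow_pos_of_pos hAc _)
  set T : ℝ := (A/c) ^ (-s) with hT_def
  have hT : 0 < T := Real.rpow_pos_of_pos hAc _
  have hsne : s ≠ 0 := hs.ne'
  have hsm1 : 0 < s - ((m:ℝ)-1) := by linarith
  have hms : 0 < (m:ℝ) - s := by linarith
  -- split the domain
  have hsplit : Set.Ioi (0:ℝ) = Set.Ioc 0 T ∪ Set.Ioi T := (Set.Ioc_union_Ioi_eq_Ioi hT.le).symm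
  rw [hsplit, lintegral_union measurableSet_Ioi (Set.Ioc_disjoint_Ioi le_rfl)]
  have part1 : (∫⁻ t in Set.Ioc (0:ℝ) T,
      ENNReal.ofReal (t ^ (-a) * min A (c * t ^ (-(1/s))))) ≤
      ENNReal.ofReal ((s/(s-((m:ℝ)-1))) * (A * (A/c) ^ ((m:ℝ)-1-s))) := by
    have hb : ∀ t ∈ Set.Ioc (0:ℝ) T,
        ENNReal.ofReal (t ^ (-a) * min A (c * t ^ (-(1/s)))) ≤
        ENNReal.ofReal (A * t ^ (-a)) := by
      intro t ht
      apply ENNReal.ofReal_le_ofReal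
      rw [mul_comm]
      exact mul_le_mul (min_le_left _ _) le_rfl (Real.rpow_nonneg ht.1.le _) hA.le
    calc _ ≤ ∫⁻ t in Set.Ioc (0:ℝ) T, ENNReal.ofReal (A * t ^ (-a)) :=
            setLIntegral_mono (by fun_prop) hb
      _ ≤ _ := by
        have hint : IntegrableOn (fun t : ℝ => A * t ^ (-a)) (Set.Ioc 0 T) :=
          ((intervalIntegral.intervalIntegrable_rpow'
            (by linarith : (-1:ℝ) < -a)).1).const_mul A
        rw [← ofReal_integral_eq_lintegral_ofReal hint ?_]
        · apply ENNReal.ofReal_le_ofReal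
          rw [MeasureTheory.integral_const_mul]
          have heq : (∫ t in Set.Ioc (0:ℝ) T, t ^ (-a)) = ∫ t in (0:ℝ)..T, t ^ (-a) := by
            rw [intervalIntegral.integral_of_le hT.le]
          rw [heq, integral_rpow (Or.inl (by linarith))]
          rw [Real.zero_rpow (by linarith), sub_zero]
          have hTpow : T ^ (-a + 1) = (A/c) ^ ((m:ℝ)-1-s) := by
            rw [hT_def, ← Real.rpow_mul hAc.le]
            congr 1
            field_simp [ha_def]
            have E2 : s * a = (m:ℝ) - 1 := by rw [ha_def, mul_div_assoc', mul_div_cancel_left₀ _ hsne]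
            linear_combination E2
          rw [hTpow]
          apply le_of_eq
          have h5 : s - ((m:ℝ)-1) ≠ 0 := hsm1.ne'
          have h6 : (1:ℝ) - (m:ℝ) + s ≠ 0 := by intro h; linarith
          field_simp [ha_def, h5, h6]
          have E1 : (1 - a) * (1 - a)⁻¹ = 1 := mul_inv_cancel₀ (by linarith)
          have E2 : s * a = (m:ℝ) - 1 := by rw [ha_def, mul_div_assoc', mul_div_cancel_left₀ _ hsne]
          linear_combination s * E1 + (1 - a)⁻¹ * E2
        · refine (ae_restrict_iff' measurableSet_Ioc).mpr (ae_of_all _ fun t ht => ?_)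
          exact mul_nonneg hA.le (Real.rpow_nonneg ht.1.le _)
  have part2 : (∫⁻ t in Set.Ioi T,
      ENNReal.ofReal (t ^ (-a) * min A (c * t ^ (-(1/s))))) ≤
      ENNReal.ofReal ((s/((m:ℝ)-s)) * (A * (A/c) ^ ((m:ℝ)-1-s))) := by
    have hb : ∀ t ∈ Set.Ioi T,
        ENNReal.ofReal (t ^ (-a) * min A (c * t ^ (-(1/s)))) ≤
        ENNReal.ofReal (c * t ^ (-((m:ℝ)/s))) := by
      intro t ht
      have ht0 : (0:ℝ) < t := hT.trans ht
      apply ENNReal.ofReal_le_ofReal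
      calc t ^ (-a) * min A (c * t ^ (-(1/s)))
          ≤ t ^ (-a) * (c * t ^ (-(1/s))) :=
            mul_le_mul_of_nonneg_left (min_le_right _ _) (Real.rpow_nonneg ht0.le _)
        _ = c * t ^ (-((m:ℝ)/s)) := by
            rw [mul_comm (t ^ (-a)), mul_assoc, ← Real.rpow_add ht0]
            congr 2
            field_simp [ha_def]
            rw [ha_def, mul_div_assoc', mul_div_cancel_left₀ _ hsne]; ring
    calc _ ≤ ∫⁻ t in Set.Ioi T, ENNReal.ofReal (c * t ^ (-((m:ℝ)/s))) :=
            setLIntegral_mono (by fun_prop) hb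
      _ ≤ _ := by
        have hlt : -((m:ℝ)/s) < -1 := by
          rw [neg_lt_neg_iff]
          rw [lt_div_iff₀ hs]
          linarith
        have hint : IntegrableOn (fun t : ℝ => c * t ^ (-((m:ℝ)/s))) (Set.Ioi T) :=
          (integrableOn_Ioi_rpow_of_lt hlt hT).const_mul c
        rw [← ofReal_integral_eq_lintegral_ofReal hint ?_]
        · apply ENNReal.ofReal_le_ofReal
          rw [MeasureTheory.integral_const_mul, integral_Ioi_rpow_of_lt hlt hT]
          have hTpow : T ^ (-((m:ℝ)/s) + 1) = (A/c) ^ ((m:ℝ)-s) := by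
            rw [hT_def, ← Real.rpow_mul hAc.le]
            congr 1
            field_simp
            ring
          rw [hTpow]
          apply le_of_eq
          have hrw : (A/c) ^ ((m:ℝ)-s) = (A/c) ^ ((m:ℝ)-1-s) * (A/c) := by
            rw [← Real.rpow_add_one hAc.ne' ((m:ℝ)-1-s)]
            congr 1
            ring
          rw [hrw]
          have h7 : -(m:ℝ) + s ≠ 0 := by intro h; linarith
          have h8 : (m:ℝ) - s ≠ 0 := hms.ne'
          field_simp [h7, h8, hc.ne', hA.ne']
          ring
        · refine (ae_restrict_iff' measurableSet_Ioi).mpr (ae_of_all _ fun t ht => ?_)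
          exact mul_nonneg hc.le (Real.rpow_nonneg (hT.trans ht).le _)
  calc _ ≤ ENNReal.ofReal ((s/(s-((m:ℝ)-1))) * (A * (A/c) ^ ((m:ℝ)-1-s))) +
          ENNReal.ofReal ((s/((m:ℝ)-s)) * (A * (A/c) ^ ((m:ℝ)-1-s))) :=
        add_le_add part1 part2
    _ = _ := by
        rw [← ENNReal.ofReal_add (by positivity) (by positivity)]
        congr 1
        ring

set_option maxHeartbeats 1000000 in
/-- **Falconer's transversality lemma.** Let `0 < s < d` be non-integral. Then there is
a constant `D₀ < ∞`, depending only on `d` and `s`, such that for every affine injection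
`T x = L x + b` of `ℝ^d` whose linear part has singular values `α 0 ≥ … ≥ α (d-1) > 0`
(given via a singular value decomposition), one has
`∫_{[0,1]^d} |T x|^(-s) dx ≤ D₀ / Φ^s(T)`. -/
theorem falconer_transversality
    (d : ℕ) (hd : 0 < d) (s : ℝ) (hs : 0 < s) (hsd : s < d)
    (hnonint : ∀ k : ℤ, (k : ℝ) ≠ s) :
    ∃ D₀ : ℝ, 0 < D₀ ∧
      ∀ (L : EuclideanSpace ℝ (Fin d) →ₗ[ℝ] EuclideanSpace ℝ (Fin d))
        (b : EuclideanSpace ℝ (Fin d)) (α : ℕ → ℝ)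
        (U V : EuclideanSpace ℝ (Fin d) ≃ₗᵢ[ℝ] EuclideanSpace ℝ (Fin d)),
        (∀ x, L x = U ((WithLp.equiv 2 (Fin d → ℝ)).symm fun i => α i * V x i)) →
        (∀ i < d, 0 < α i) →
        (∀ i j, i ≤ j → j < d → α j ≤ α i) →
        (∫⁻ x in {x : EuclideanSpace ℝ (Fin d) | ∀ i : Fin d, x i ∈ Set.Icc (0:ℝ) 1},
            ENNReal.ofReal (‖L x + b‖ ^ (-s)) ∂volume) ≤
          ENNReal.ofReal (D₀ / svf α s) := by
  classical
  set m : ℕ := ⌈s⌉₊ with hm_def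
  have hm0 : 0 < m := Nat.ceil_pos.mpr hs
  have hmd : m ≤ d := Nat.ceil_le.mpr hsd.le
  have hm2 : s < m :=
    lt_of_le_of_ne (Nat.le_ceil s) (fun h => hnonint m (by exact_mod_cast h.symm))
  have hm1 : (m:ℝ) - 1 < s := by
    have := Nat.ceil_lt_add_one hs.le
    rw [← hm_def] at this
    linarith
  have hm1' : (1:ℝ) ≤ (m:ℝ) := by exact_mod_cast hm0
  have hcast : ((m - 1 : ℕ) : ℝ) = (m:ℝ) - 1 := by
    rw [Nat.cast_sub hm0, Nat.cast_one]
  set A : ℝ := 2 * Real.sqrt d with hA_def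
  have hA : 0 < A := by
    have : (0:ℝ) < Real.sqrt d := Real.sqrt_pos.mpr (by exact_mod_cast hd)
    rw [hA_def]; linarith
  set p : ℝ := s/(s-((m:ℝ)-1)) + s/((m:ℝ)-s) with hp_def
  have hp : 0 < p := by
    rw [hp_def]
    have h1 : 0 < s/(s-((m:ℝ)-1)) := div_pos hs (by linarith)
    have h2 : 0 < s/((m:ℝ)-s) := div_pos hs (by linarith)
    linarith
  refine ⟨p * A ^ (d - m + 1) * A ^ ((m:ℝ)-1-s) * 2 ^ s, by positivity, ?_⟩
  intro L b α U V hL hαpos _hαdec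
  set Q : Set (EuclideanSpace ℝ (Fin d)) :=
    {x : EuclideanSpace ℝ (Fin d) | ∀ i : Fin d, x i ∈ Set.Icc (0:ℝ) 1} with hQ_def
  set f : EuclideanSpace ℝ (Fin d) → ℝ := fun x => ‖L x + b‖ ^ (-s) with hf_def
  have hαm : 0 < α (m - 1) := hαpos _ (by omega)
  have hc₁ : 0 < 2 / α (m-1) := by positivity
  have hPpos : 0 < ∏ i ∈ Finset.range (m-1), α i :=
    Finset.prod_pos fun i hi => hαpos i (by have := Finset.mem_range.mp hi; omega)
  have hsvf : 0 < svf α s := by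
    rw [svf, ← hm_def]
    exact mul_pos hPpos (Real.rpow_pos_of_pos hαm _)
  -- norm identity
  have hnorm : ∀ x, ‖L x + b‖ =
      ‖((WithLp.equiv 2 (Fin d → ℝ)).symm fun i => α i * V x i) + U.symm b‖ := by
    intro x
    rw [hL x,
      show (U ((WithLp.equiv 2 (Fin d → ℝ)).symm fun i => α i * V x i) + b)
        = U (((WithLp.equiv 2 (Fin d → ℝ)).symm fun i => α i * V x i) + U.symm b) by
          rw [map_add, U.apply_symm_apply],
      U.norm_map]
  -- coordinate bounds
  have hcoord : ∀ (z : EuclideanSpace ℝ (Fin d)) (i : Fin d), |z i| ≤ ‖z‖ := by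
    intro z i
    rw [EuclideanSpace.norm_eq, ← Real.sqrt_sq_eq_abs]
    apply Real.sqrt_le_sqrt
    have := Finset.single_le_sum (f := fun j => ‖z j‖ ^ 2)
      (fun j _ => sq_nonneg _) (Finset.mem_univ i)
    simpa [Real.norm_eq_abs, sq_abs] using this
  have hnormQ : ∀ x ∈ Q, ‖x‖ ≤ Real.sqrt d := by
    intro x hx
    rw [EuclideanSpace.norm_eq]
    apply Real.sqrt_le_sqrt
    calc ∑ i, ‖x i‖ ^ 2 ≤ ∑ _i : Fin d, (1:ℝ) := by
          apply Finset.sum_le_sum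
          intro i _
          have h1 := (hx i).1; have h2 := (hx i).2
          rw [Real.norm_eq_abs, sq_abs]; nlinarith
      _ = d := by simp
  -- measurability
  have hfmeas : Measurable f := by
    have hLcont : Continuous fun x : EuclideanSpace ℝ (Fin d) => L x + b :=
      (LinearMap.continuous_of_finiteDimensional L).add continuous_const
    rw [hf_def]; fun_prop
  -- measure estimate for a single radius
  have hmeas_est : ∀ r : ℝ, 0 < r →
      volume ({x : EuclideanSpace ℝ (Fin d) | ‖L x + b‖ < r} ∩ Q) ≤
        ENNReal.ofReal (∏ i ∈ Finset.range d, min A ((2 / α i) * r)) := by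
    intro r hr
    set J : Fin d → Set ℝ := fun i =>
      Set.Icc (max (-Real.sqrt d) ((-(U.symm b i) - r)/α i))
              (min (Real.sqrt d) ((-(U.symm b i) + r)/α i)) with hJ_def
    have hsub : {x : EuclideanSpace ℝ (Fin d) | ‖L x + b‖ < r} ∩ Q ⊆
        ⇑V ⁻¹' (WithLp.ofLp ⁻¹' Set.univ.pi J) := by
      rintro x ⟨hx1, hx2⟩
      rw [Set.mem_preimage, Set.mem_preimage, Set.mem_pi]
      intro i _
      have hαi : 0 < α (i : ℕ) := hαpos i i.isLt
      have habs : |α i * V x i + U.symm b i| < r := by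
        have h1 : |α i * V x i + U.symm b i| ≤
            ‖((WithLp.equiv 2 (Fin d → ℝ)).symm fun j => α j * V x j) + U.symm b‖ :=
          hcoord (((WithLp.equiv 2 (Fin d → ℝ)).symm fun j => α j * V x j) + U.symm b) i
        rw [← hnorm x] at h1
        exact lt_of_le_of_lt h1 hx1
      have hy : |V x i| ≤ Real.sqrt d := by
        calc |V x i| ≤ ‖V x‖ := hcoord _ i
          _ = ‖x‖ := V.norm_map x
          _ ≤ Real.sqrt d := hnormQ x hx2
      rw [abs_lt] at habs
      rw [abs_le] at hy
      rw [hJ_def, Set.mem_Icc]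
      constructor
      · apply max_le hy.1
        rw [div_le_iff₀ hαi]
        nlinarith [habs.1]
      · apply le_min hy.2
        rw [le_div_iff₀ hαi]
        nlinarith [habs.2]
    have hVJ : volume (⇑V ⁻¹' (WithLp.ofLp ⁻¹' Set.univ.pi J)) = ∏ i : Fin d, volume (J i) := by
      rw [V.measurePreserving.measure_preimage
        (((MeasurableSet.univ_pi fun i => measurableSet_Icc).preimage
          (PiLp.volume_preserving_ofLp (Fin d)).measurable).nullMeasurableSet)]
      exact ((PiLp.volume_preserving_ofLp (Fin d)).measure_preimage
        ((MeasurableSet.univ_pi fun i => measurableSet_Icc).nullMeasurableSet)).trans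
        (volume_pi_pi J)
    calc volume ({x : EuclideanSpace ℝ (Fin d) | ‖L x + b‖ < r} ∩ Q)
        ≤ volume (⇑V ⁻¹' (WithLp.ofLp ⁻¹' Set.univ.pi J)) := measure_mono hsub
      _ = ∏ i : Fin d, volume (J i) := hVJ
      _ ≤ ∏ i : Fin d, ENNReal.ofReal (min A ((2 / α i) * r)) := by
          apply Finset.prod_le_prod'
          intro i _
          have hαi : 0 < α (i : ℕ) := hαpos i i.isLt
          rw [hJ_def, Real.volume_Icc]
          apply ENNReal.ofReal_le_ofReal
          apply le_min
          · rw [hA_def]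
            have e1 := min_le_left (Real.sqrt (d:ℕ)) ((-(U.symm b i) + r)/α i)
            have e2 := le_max_left (-Real.sqrt (d:ℕ)) ((-(U.symm b i) - r)/α i)
            linarith
          · calc min (Real.sqrt d) ((-(U.symm b i) + r)/α i)
                  - max (-Real.sqrt d) ((-(U.symm b i) - r)/α i)
                ≤ (-(U.symm b i) + r)/α i - (-(U.symm b i) - r)/α i :=
                  sub_le_sub (min_le_right _ _) (le_max_right _ _)
              _ = (2 / α i) * r := by field_simp; ring
      _ = ENNReal.ofReal (∏ i : Fin d, min A ((2 / α i) * r)) :=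
          (ENNReal.ofReal_prod_of_nonneg fun (i : Fin d) _ =>
            le_min hA.le (mul_nonneg (div_nonneg (by norm_num) (hαpos i i.isLt).le) hr.le)).symm
      _ = _ := by rw [Finset.prod_range fun i : ℕ => min A ((2 / α i) * r)]
  -- real product bound
  have hprod : ∀ r : ℝ, 0 < r →
      (∏ i ∈ Finset.range d, min A ((2 / α i) * r)) ≤
        (A ^ (d - m) * ∏ i ∈ Finset.range (m-1), (2 / α i)) *
          (r ^ (m-1) * min A ((2 / α (m-1)) * r)) := by
    intro r hr
    have key : ∀ i, i < d → 0 ≤ min A ((2 / α i) * r) := fun i hi =>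
      le_min hA.le (mul_nonneg (div_nonneg (by norm_num) (hαpos i hi).le) hr.le)
    have hsplit : (∏ i ∈ Finset.range d, min A ((2 / α i) * r)) =
        ((∏ i ∈ Finset.range (m-1), min A ((2 / α i) * r)) * min A ((2 / α (m-1)) * r)) *
          ∏ i ∈ Finset.Ico m d, min A ((2 / α i) * r) := by
      rw [← Finset.prod_range_mul_prod_Ico _ hmd]
      congr 1
      rw [show m = (m-1)+1 by omega, Finset.prod_range_succ]
      congr 2 <;> omega
    rw [hsplit]
    have t1 : (∏ i ∈ Finset.range (m-1), min A ((2 / α i) * r)) ≤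
        (∏ i ∈ Finset.range (m-1), (2 / α i)) * r ^ (m-1) := by
      have e1 : (∏ i ∈ Finset.range (m-1), min A ((2 / α i) * r)) ≤
          ∏ i ∈ Finset.range (m-1), ((2 / α i) * r) := by
        apply Finset.prod_le_prod
        · intro i hi; exact key i (by have := Finset.mem_range.mp hi; omega)
        · intro i hi; exact min_le_right _ _
      have e2 : (∏ i ∈ Finset.range (m-1), ((2 / α i) * r)) =
          (∏ i ∈ Finset.range (m-1), (2 / α i)) * r ^ (m-1) := by
        rw [Finset.prod_mul_distrib, Finset.prod_const, Finset.card_range]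
      exact e1.trans (le_of_eq e2)
    have t2 : (∏ i ∈ Finset.Ico m d, min A ((2 / α i) * r)) ≤ A ^ (d - m) := by
      calc (∏ i ∈ Finset.Ico m d, min A ((2 / α i) * r)) ≤ ∏ _i ∈ Finset.Ico m d, A := by
            apply Finset.prod_le_prod
            · intro i hi; exact key i (Finset.mem_Ico.mp hi).2
            · intro i hi; exact min_le_left _ _
        _ = A ^ (d - m) := by rw [Finset.prod_const, Nat.card_Ico]
    have hP1 : 0 ≤ ∏ i ∈ Finset.range (m-1), min A ((2 / α i) * r) :=
      Finset.prod_nonneg fun i hi => key i (by have := Finset.mem_range.mp hi; omega)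
    have hlast : 0 ≤ min A ((2 / α (m-1)) * r) := key (m-1) (by omega)
    have hC : 0 ≤ (∏ i ∈ Finset.range (m-1), (2 / α i)) * r ^ (m-1) :=
      mul_nonneg (Finset.prod_nonneg fun i hi =>
        div_nonneg (by norm_num) (hαpos i (by have := Finset.mem_range.mp hi; omega)).le)
        (pow_nonneg hr.le _)
    calc ((∏ i ∈ Finset.range (m-1), min A ((2 / α i) * r)) * min A ((2 / α (m-1)) * r)) *
          ∏ i ∈ Finset.Ico m d, min A ((2 / α i) * r)
        ≤ (((∏ i ∈ Finset.range (m-1), (2 / α i)) * r ^ (m-1)) * min A ((2 / α (m-1)) * r)) *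
          A ^ (d - m) := by
          apply mul_le_mul
          · exact mul_le_mul_of_nonneg_right t1 hlast
          · exact t2
          · exact Finset.prod_nonneg fun i hi => key i (Finset.mem_Ico.mp hi).2
          · exact mul_nonneg hC hlast
      _ = (A ^ (d - m) * ∏ i ∈ Finset.range (m-1), (2 / α i)) *
          (r ^ (m-1) * min A ((2 / α (m-1)) * r)) := by ring
  -- layer cake
  have layer : (∫⁻ x in Q, ENNReal.ofReal (f x) ∂volume)
      = ∫⁻ t in Set.Ioi (0:ℝ), volume ({x | t < f x} ∩ Q) := by
    rw [lintegral_eq_lintegral_meas_lt (volume.restrict Q)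
      (Filter.Eventually.of_forall fun x => Real.rpow_nonneg (norm_nonneg _) _)
      hfmeas.aemeasurable]
    apply lintegral_congr
    intro t
    exact Measure.restrict_apply (hfmeas measurableSet_Ioi)
  set c₁ : ℝ := 2 / α (m-1) with hc₁_def
  set K : ℝ := A ^ (d - m) * ∏ i ∈ Finset.range (m-1), (2 / α i) with hK_def
  have hKpos : 0 < K := by
    rw [hK_def]
    apply mul_pos (pow_pos hA _)
    exact Finset.prod_pos fun i hi =>
      div_pos (by norm_num) (hαpos i (by have := Finset.mem_range.mp hi; omega))
  -- pointwise bound in t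
  have hpoint : ∀ t ∈ Set.Ioi (0:ℝ),
      volume ({x | t < f x} ∩ Q) ≤
        ENNReal.ofReal (K * (t ^ (-(((m:ℝ)-1)/s)) * min A (c₁ * t ^ (-(1/s))))) := by
    intro t ht
    rw [Set.mem_Ioi] at ht
    set r : ℝ := t ^ (-(1/s)) with hr_def
    have hr : 0 < r := Real.rpow_pos_of_pos ht _
    have hsub2 : {x | t < f x} ⊆ {x : EuclideanSpace ℝ (Fin d) | ‖L x + b‖ < r} := by
      intro x hx
      simp only [Set.mem_setOf_eq] at hx ⊢
      have hn : 0 < ‖L x + b‖ := by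
        rcases (norm_nonneg (L x + b)).eq_or_lt with h | h
        · exfalso
          rw [hf_def] at hx
          simp only at hx
          rw [← h, Real.zero_rpow (neg_ne_zero.mpr hs.ne')] at hx
          exact absurd hx (not_lt.mpr ht.le)
        · exact h
      have h2 : (‖L x + b‖ ^ (-s)) ^ (-(1/s)) = ‖L x + b‖ := by
        rw [← Real.rpow_mul (norm_nonneg _), show (-s) * (-(1/s)) = 1 by field_simp,
          Real.rpow_one]
      have h3 := Real.rpow_lt_rpow_of_neg ht hx
        (neg_lt_zero.mpr (by positivity : (0:ℝ) < 1/s))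
      rw [h2] at h3
      exact h3
    have hrpow : r ^ (m-1) = t ^ (-(((m:ℝ)-1)/s)) := by
      rw [hr_def, ← Real.rpow_natCast (t ^ (-(1/s))) (m-1), ← Real.rpow_mul ht.le]
      congr 1
      rw [hcast]
      ring
    calc volume ({x | t < f x} ∩ Q)
        ≤ volume ({x : EuclideanSpace ℝ (Fin d) | ‖L x + b‖ < r} ∩ Q) :=
          measure_mono (Set.inter_subset_inter_left Q hsub2)
      _ ≤ ENNReal.ofReal (∏ i ∈ Finset.range d, min A ((2 / α i) * r)) := hmeas_est r hr
      _ ≤ ENNReal.ofReal (K * (r ^ (m-1) * min A (c₁ * r))) :=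
          ENNReal.ofReal_le_ofReal (hprod r hr)
      _ = _ := by rw [hrpow]
  -- assemble everything
  calc (∫⁻ x in Q, ENNReal.ofReal (f x) ∂volume)
      = ∫⁻ t in Set.Ioi (0:ℝ), volume ({x | t < f x} ∩ Q) := layer
    _ ≤ ∫⁻ t in Set.Ioi (0:ℝ),
        ENNReal.ofReal (K * (t ^ (-(((m:ℝ)-1)/s)) * min A (c₁ * t ^ (-(1/s))))) :=
        setLIntegral_mono (by fun_prop) hpoint
    _ = ENNReal.ofReal K * ∫⁻ t in Set.Ioi (0:ℝ),
        ENNReal.ofReal (t ^ (-(((m:ℝ)-1)/s)) * min A (c₁ * t ^ (-(1/s)))) := by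
        simp_rw [ENNReal.ofReal_mul hKpos.le]
        exact lintegral_const_mul' _ _ ENNReal.ofReal_ne_top
    _ ≤ ENNReal.ofReal K * ENNReal.ofReal (p * (A * (A/c₁) ^ ((m:ℝ)-1-s))) :=
        mul_le_mul_right (falconer_oneDim hA hc₁ hs hm1 hm2) _
    _ = ENNReal.ofReal (K * (p * (A * (A/c₁) ^ ((m:ℝ)-1-s)))) :=
        (ENNReal.ofReal_mul hKpos.le).symm
    _ ≤ _ := by
        apply ENNReal.ofReal_le_ofReal
        apply le_of_eq
        have hY : (0:ℝ) < (2:ℝ) ^ ((m:ℝ)-1-s) := Real.rpow_pos_of_pos two_pos _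
        have hZ : 0 < α (m-1) ^ (s - ((m:ℝ)-1)) := Real.rpow_pos_of_pos hαm _
        have h1 : A / c₁ = A * α (m-1) / 2 := by rw [hc₁_def]; field_simp
        have h2 : (A * α (m-1) / 2) ^ ((m:ℝ)-1-s)
            = A ^ ((m:ℝ)-1-s) * α (m-1) ^ ((m:ℝ)-1-s) / 2 ^ ((m:ℝ)-1-s) := by
          rw [Real.div_rpow (by positivity) (by norm_num), Real.mul_rpow hA.le hαm.le]
        have h3 : α (m-1) ^ ((m:ℝ)-1-s) = (α (m-1) ^ (s - ((m:ℝ)-1)))⁻¹ := by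
          rw [← Real.rpow_neg hαm.le]; congr 1; ring
        have h4 : (2:ℝ) ^ s = 2 ^ (m-1 : ℕ) / 2 ^ ((m:ℝ)-1-s) := by
          rw [← Real.rpow_natCast 2 (m-1), hcast, ← Real.rpow_sub two_pos]
          congr 1; ring
        have h5 : (∏ i ∈ Finset.range (m-1), (2 / α i)) =
            2 ^ (m-1 : ℕ) / ∏ i ∈ Finset.range (m-1), α i := by
          rw [Finset.prod_div_distrib, Finset.prod_const, Finset.card_range]
        have h6 : A ^ (d - m + 1) = A ^ (d - m) * A := pow_succ A (d-m)
        rw [svf, ← hm_def, hK_def, h1, h2, h3, h5, h6, h4]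
        field_simp
end
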